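/- Let α be a positive integer and let φ : [0,1] → ℝ be (α+1)-times continuously differentiable on (0,1) such that there exist W > 0, c ≥ 0, c' ≥ 0 with W p^{-1} - c' ≤ |φ^{(α+1)}(p)| ≤ W p^{-1} + c for all p ∈ (0,1). Then there exist constants W_α > 0, c_α ≥ 0, c'_α ≥ 0 such that W_α ln(1/p) - c'_α ≤ |φ^{(α)}(p)| ≤ W_α ln(1/p) + c_α for all p ∈ (0,1). -/

import Mathlib

open Set

private lemma integral_Wc (W c a b : ℝ) (ha : 0 < a) (hab : a ≤ b) :
    ∫ t in a..b, (W * t⁻¹ + c) = W * (Real.log b - Real.log a) + c * (b - a) := by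
  have hb : 0 < b := lt_of_lt_of_le ha hab
  have h0 : (0:ℝ) ∉ Set.uIcc a b := by
    rw [Set.uIcc_of_le hab]; rintro ⟨h1, h2⟩; linarith
  have hinv : IntervalIntegrable (fun t : ℝ => t⁻¹) MeasureTheory.volume a b := by
    apply ContinuousOn.intervalIntegrable
    exact continuousOn_id.inv₀ (fun t ht h0' => h0 (h0' ▸ ht))
  rw [intervalIntegral.integral_add (hinv.const_mul W) intervalIntegrable_const,
    intervalIntegral.integral_const_mul, integral_inv h0, intervalIntegral.integral_const,
    Real.log_div (ne_of_gt hb) (ne_of_gt ha), smul_eq_mul]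
  ring

/-- If `φ` is `(α+1)`-times continuously differentiable on `(0,1)` for a
positive integer `α`, with `W p⁻¹ - c' ≤ |φ^{(α+1)}(p)| ≤ W p⁻¹ + c`, then the `α`th
derivative diverges logarithmically:
`W_α log(1/p) - c'_α ≤ |φ^{(α)}(p)| ≤ W_α log(1/p) + c_α`. -/
theorem divergence_speed_log (α : ℕ) (hα : 0 < α) (φ : ℝ → ℝ)
    (hφ : ContDiffOn ℝ (α + 1) φ (Set.Ioo 0 1))
    (W c c' : ℝ) (hW : 0 < W) (hc : 0 ≤ c) (hc' : 0 ≤ c')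
    (hub : ∀ p ∈ Set.Ioo (0:ℝ) 1,
      |iteratedDerivWithin (α + 1) φ (Set.Ioo 0 1) p| ≤ W * p⁻¹ + c)
    (hlb : ∀ p ∈ Set.Ioo (0:ℝ) 1,
      W * p⁻¹ - c' ≤ |iteratedDerivWithin (α + 1) φ (Set.Ioo 0 1) p|) :
    ∃ Wα cα cα' : ℝ, 0 < Wα ∧ 0 ≤ cα ∧ 0 ≤ cα' ∧
      ∀ p ∈ Set.Ioo (0:ℝ) 1,
        Wα * Real.log (1 / p) - cα' ≤ |iteratedDerivWithin α φ (Set.Ioo 0 1) p| ∧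
        |iteratedDerivWithin α φ (Set.Ioo 0 1) p| ≤ Wα * Real.log (1 / p) + cα := by
  set s : Set ℝ := Set.Ioo 0 1 with hsdef
  have hso : IsOpen s := isOpen_Ioo
  have hsu : UniqueDiffOn ℝ s := hso.uniqueDiffOn
  set f := iteratedDerivWithin α φ s with hfdef
  set g := iteratedDerivWithin (α+1) φ s with hgdef
  -- derivative of f is g on s
  have hder : ∀ x ∈ s, HasDerivAt f (g x) x := by
    intro x hx
    have hdiff : DifferentiableOn ℝ f s :=
      hφ.differentiableOn_iteratedDerivWithin (by exact_mod_cast Nat.lt_succ_self α) hsu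
    have hx' : s ∈ nhds x := hso.mem_nhds hx
    have hda : DifferentiableAt ℝ f x := (hdiff x hx).differentiableAt hx'
    have hgx : g x = deriv f x := by
      rw [hgdef, iteratedDerivWithin_succ, derivWithin_of_isOpen hso hx]
    rw [hgx]; exact hda.hasDerivAt
  have hgc : ContinuousOn g s :=
    hφ.continuousOn_iteratedDerivWithin (by exact_mod_cast le_rfl) hsu
  -- FTC
  have hftc : ∀ a b : ℝ, a ∈ s → b ∈ s → a ≤ b → f b - f a = ∫ t in a..b, g t := by
    intro a b ha hb hab
    have hsub : Set.uIcc a b ⊆ s := by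
      rw [Set.uIcc_of_le hab]; exact Set.Icc_subset_Ioo ha.1 hb.2
    exact (intervalIntegral.integral_eq_sub_of_hasDerivAt
      (fun x hx => hder x (hsub hx)) ((hgc.mono hsub).intervalIntegrable)).symm
  -- upper estimate for increments
  have hub' : ∀ a b : ℝ, a ∈ s → b ∈ s → a ≤ b →
      |f b - f a| ≤ W * (Real.log b - Real.log a) + c * (b - a) := by
    intro a b ha hb hab
    have hsub : Set.uIcc a b ⊆ s := by
      rw [Set.uIcc_of_le hab]; exact Set.Icc_subset_Ioo ha.1 hb.2
    have h0 : (0:ℝ) ∉ Set.uIcc a b := fun h => (hsub h).1.false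
    have hint2 : IntervalIntegrable (fun t : ℝ => W * t⁻¹ + c) MeasureTheory.volume a b := by
      apply ContinuousOn.intervalIntegrable
      exact (continuousOn_const.mul
        (continuousOn_id.inv₀ (fun t ht h0' => h0 (h0' ▸ ht)))).add continuousOn_const
    rw [hftc a b ha hb hab]
    calc |∫ t in a..b, g t| ≤ ∫ t in a..b, |g t| :=
          intervalIntegral.abs_integral_le_integral_abs hab
      _ ≤ ∫ t in a..b, (W * t⁻¹ + c) := by
          apply intervalIntegral.integral_mono_on hab
            ((hgc.mono hsub).abs.intervalIntegrable) hint2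
          intro x hx
          exact hub x (hsub (by rwa [Set.uIcc_of_le hab]))
      _ = W * (Real.log b - Real.log a) + c * (b - a) := integral_Wc W c a b ha.1 hab
  -- lower estimate for increments, assuming constant sign of g on [a,b]
  have hlb' : ∀ a b : ℝ, a ∈ s → b ∈ s → a ≤ b →
      ((∀ x ∈ Set.Icc a b, 0 ≤ g x) ∨ (∀ x ∈ Set.Icc a b, g x ≤ 0)) →
      W * (Real.log b - Real.log a) - c' * (b - a) ≤ |f b - f a| := by
    intro a b ha hb hab hsgn
    have hsub : Set.uIcc a b ⊆ s := by
      rw [Set.uIcc_of_le hab]; exact Set.Icc_subset_Ioo ha.1 hb.2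
    have h0 : (0:ℝ) ∉ Set.uIcc a b := fun h => (hsub h).1.false
    have hint2 : IntervalIntegrable (fun t : ℝ => W * t⁻¹ + (-c')) MeasureTheory.volume a b := by
      apply ContinuousOn.intervalIntegrable
      exact (continuousOn_const.mul
        (continuousOn_id.inv₀ (fun t ht h0' => h0 (h0' ▸ ht)))).add continuousOn_const
    have hgi : IntervalIntegrable g MeasureTheory.volume a b := (hgc.mono hsub).intervalIntegrable
    have key : ∫ t in a..b, |g t| ≤ |∫ t in a..b, g t| := by
      rcases hsgn with hpos | hneg
      · have : ∫ t in a..b, |g t| = ∫ t in a..b, g t := by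
          apply intervalIntegral.integral_congr
          intro x hx
          exact abs_of_nonneg (hpos x (by rwa [Set.uIcc_of_le hab] at hx))
        rw [this]; exact le_abs_self _
      · have : ∫ t in a..b, |g t| = -∫ t in a..b, g t := by
          rw [← intervalIntegral.integral_neg]
          apply intervalIntegral.integral_congr
          intro x hx
          exact abs_of_nonpos (hneg x (by rwa [Set.uIcc_of_le hab] at hx))
        rw [this]; exact neg_le_abs _
    have hmono : ∫ t in a..b, (W * t⁻¹ + (-c')) ≤ ∫ t in a..b, |g t| := by
      apply intervalIntegral.integral_mono_on hab hint2 ((hgc.mono hsub).abs.intervalIntegrable)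
      intro x hx
      have := hlb x (hsub (by rwa [Set.uIcc_of_le hab]))
      linarith
    have hval := integral_Wc W (-c') a b ha.1 hab
    rw [hftc a b ha hb hab]
    rw [hval] at hmono
    linarith [le_trans hmono key]
  -- set up t0
  set t0 : ℝ := min (1/2) (W / (c' + 1)) with ht0def
  have ht0pos : 0 < t0 := lt_min (by norm_num) (div_pos hW (by linarith))
  have ht0half : t0 ≤ 1/2 := min_le_left _ _
  have ht0s : t0 ∈ s := ⟨ht0pos, by linarith⟩
  have hgbig : ∀ t ∈ Set.Ioc (0:ℝ) t0, 1 ≤ |g t| := by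
    intro t ht
    have hts : t ∈ s := ⟨ht.1, by linarith [ht.2]⟩
    have h1 : t ≤ W / (c' + 1) := le_trans ht.2 (min_le_right _ _)
    have h2 : t * (c' + 1) ≤ W := by
      rw [← le_div_iff₀ (by linarith : (0:ℝ) < c' + 1)]; exact h1
    have h3 : c' + 1 ≤ W * t⁻¹ := by
      rw [← div_eq_mul_inv, le_div_iff₀ ht.1]; linarith [mul_comm t (c' + 1)]
    linarith [hlb t hts]
  -- constant sign on (0, t0]
  have hsgn : (∀ x ∈ Set.Ioc (0:ℝ) t0, 0 ≤ g x) ∨ (∀ x ∈ Set.Ioc (0:ℝ) t0, g x ≤ 0) := by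
    by_cases h : 0 ≤ g t0
    · left
      intro x hx
      by_contra hneg
      push_neg at hneg
      have hcont : ContinuousOn g (Set.Icc x t0) :=
        hgc.mono (Set.Icc_subset_Ioo hx.1 ht0s.2)
      obtain ⟨z, hz, hz0⟩ := intermediate_value_Icc hx.2 hcont ⟨le_of_lt hneg, h⟩
      have := hgbig z ⟨lt_of_lt_of_le hx.1 hz.1, hz.2⟩
      rw [hz0] at this; norm_num at this
    · right
      push_neg at h
      intro x hx
      by_contra hpos
      push_neg at hpos
      have hcont : ContinuousOn g (Set.Icc x t0) :=
        hgc.mono (Set.Icc_subset_Ioo hx.1 ht0s.2)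
      obtain ⟨z, hz, hz0⟩ := intermediate_value_Icc' hx.2 hcont ⟨le_of_lt h, le_of_lt hpos⟩
      have := hgbig z ⟨lt_of_lt_of_le hx.1 hz.1, hz.2⟩
      rw [hz0] at this; norm_num at this
  have hhalf : (1/2 : ℝ) ∈ s := ⟨by norm_num, by norm_num⟩
  have hlog2 : (0:ℝ) ≤ Real.log 2 := Real.log_nonneg one_le_two
  have hlogt0 : 0 ≤ Real.log t0⁻¹ := by
    apply Real.log_nonneg
    exact (one_le_inv₀ ht0pos).mpr (by linarith)
  refine ⟨W, |f (1/2)| + W * Real.log 2 + c,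
    |f t0| + W * Real.log t0⁻¹ + c' * t0, hW, ?_, ?_, ?_⟩
  · have := abs_nonneg (f (1/2)); nlinarith
  · have := abs_nonneg (f t0); nlinarith [mul_nonneg hc' (le_of_lt ht0pos)]
  intro p hp
  have hlog1p : Real.log (1/p) = -Real.log p := by
    rw [one_div, Real.log_inv]
  have hlogt0' : Real.log t0⁻¹ = -Real.log t0 := Real.log_inv t0
  constructor
  · -- lower bound
    rcases le_or_gt t0 p with hcase | hcase
    · have h1 : Real.log (1/p) ≤ Real.log t0⁻¹ := by
        rw [one_div]
        exact Real.log_le_log (inv_pos.mpr hp.1) (inv_anti₀ ht0pos hcase)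
      have h2 : W * Real.log (1/p) ≤ W * Real.log t0⁻¹ :=
        mul_le_mul_of_nonneg_left h1 (le_of_lt hW)
      have := abs_nonneg (f p)
      nlinarith [mul_nonneg hc' (le_of_lt ht0pos), abs_nonneg (f t0)]
    · have hsgn' : (∀ x ∈ Set.Icc p t0, 0 ≤ g x) ∨ (∀ x ∈ Set.Icc p t0, g x ≤ 0) := by
        rcases hsgn with h | h
        · left; intro x hx; exact h x ⟨lt_of_lt_of_le hp.1 hx.1, hx.2⟩
        · right; intro x hx; exact h x ⟨lt_of_lt_of_le hp.1 hx.1, hx.2⟩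
      have h1 := hlb' p t0 hp ht0s (le_of_lt hcase) hsgn'
      have h2 : |f t0 - f p| ≤ |f t0| + |f p| := abs_sub _ _
      have h3 : c' * (t0 - p) ≤ c' * t0 := by nlinarith [hp.1]
      rw [hlog1p]
      rw [hlogt0'] at *
      linarith
  · -- upper bound
    rcases le_or_gt p (1/2) with hcase | hcase
    · have h1 := hub' p (1/2) hp hhalf hcase
      have h2 : |f (1/2) - f p| ≥ |f p| - |f (1/2)| := by
        have := abs_sub (f (1/2)) (f p)
        have h4 : |f p - f (1/2)| = |f (1/2) - f p| := abs_sub_comm _ _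
        have h5 := abs_sub_abs_le_abs_sub (f p) (f (1/2))
        linarith
      have hlh : Real.log (1/2 : ℝ) = -Real.log 2 := by
        rw [one_div, Real.log_inv]
      have h3 : c * (1/2 - p) ≤ c := by nlinarith [hp.1]
      rw [hlog1p]
      rw [hlh] at h1
      linarith [mul_nonneg hW.le hlog2]
    · have h1 := hub' (1/2) p hhalf hp (le_of_lt hcase)
      have h2 : |f p - f (1/2)| ≥ |f p| - |f (1/2)| := abs_sub_abs_le_abs_sub _ _
      have hlh : Real.log (1/2 : ℝ) = -Real.log 2 := by
        rw [one_div, Real.log_inv]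
      have h3 : c * (p - 1/2) ≤ c := by nlinarith [hp.2]
      have h4 : Real.log p ≤ 0 := Real.log_nonpos (le_of_lt hp.1) (le_of_lt hp.2)
      have h5 : 0 ≤ Real.log (1/p) := by rw [hlog1p]; linarith
      rw [hlh] at h1
      nlinarith
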